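/- Rhs property: for all λ-terms t, s and every variable x, t•[x := s•] →β* (t[x := s])•. -/

import Mathlib

/-- Untyped λ-terms in de Bruijn representation (terms up to α-equivalence). -/
inductive Lam : Type
  | var : Nat → Lam
  | app : Lam → Lam → Lam
  | abs : Lam → Lam
  deriving DecidableEq

namespace Lam

/-- Lift (shift up) free variables ≥ k. -/
def lift : Lam → Nat → Lam
  | var i, k => if i < k then var i else var (i + 1)
  | app s t, k => app (lift s k) (lift t k)
  | abs t, k => abs (lift t (k + 1))

/-- Capture-avoiding substitution `t[x := u]`. -/
def subst : Lam → Nat → Lam → Lam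
  | var i, k, u => if i < k then var i else if i = k then u else var (i - 1)
  | app s t, k, u => app (subst s k u) (subst t k u)
  | abs t, k, u => abs (subst t (k + 1) (lift u 0))

/-- `x` occurs free in a term. -/
def IsFree (x : Nat) : Lam → Prop
  | var i => i = x
  | app s t => IsFree x s ∨ IsFree x t
  | abs t => IsFree (x + 1) t

/-- β-reduction: the compatible closure of the β-rule. -/
inductive Beta : Lam → Lam → Prop
  | beta (t s : Lam) : Beta (app (abs t) s) (subst t 0 s)
  | appL {s s' : Lam} (t : Lam) : Beta s s' → Beta (app s t) (app s' t)
  | appR (s : Lam) {t t' : Lam} : Beta t t' → Beta (app s t) (app s t')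
  | abs {t t' : Lam} : Beta t t' → Beta (abs t) (abs t')

/-- Reflexive-transitive closure of β-reduction. -/
abbrev Betas : Lam → Lam → Prop := Relation.ReflTransGen Beta

/-- Application with built-in β-reduction at the root. -/
def appBeta : Lam → Lam → Lam
  | abs u, v => subst u 0 v
  | s, v => app s v

/-- The full-superdevelopment map. -/
def dev : Lam → Lam
  | var i => var i
  | abs t => abs (dev t)
  | app s t => appBeta (dev s) (dev t)



lemma lift_lift (t : Lam) : ∀ i k, i ≤ k →
    lift (lift t i) (k + 1) = lift (lift t k) i := by
  induction t with
  | var n =>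
    intro i k h; simp only [lift]
    split_ifs <;> (try simp only [lift, subst]) <;> (try split_ifs) <;>
      first
        | rfl
        | (exfalso; omega)
        | (congr 1; omega)
  | app a b iha ihb => intro i k h; simp [lift, iha _ _ h, ihb _ _ h]
  | abs a ih => intro i k h; simp [lift, ih (i+1) (k+1) (by omega)]

lemma lift_subst_low (t : Lam) : ∀ k n (u : Lam), k ≤ n →
    lift (subst t n u) k = subst (lift t k) (n + 1) (lift u k) := by
  induction t with
  | var m =>
    intro k n u h; simp only [subst, lift]
    split_ifs <;> (try simp only [lift, subst]) <;> (try split_ifs) <;>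
      first
        | rfl
        | (exfalso; omega)
        | (congr 1; omega)
  | app a b iha ihb => intro k n u h; simp [lift, subst, iha _ _ _ h, ihb _ _ _ h]
  | abs a ih =>
    intro k n u h
    simp only [lift, subst]
    rw [ih (k+1) (n+1) (lift u 0) (by omega), lift_lift u 0 k (by omega)]

lemma subst_lift (t : Lam) : ∀ k u, subst (lift t k) k u = t := by
  induction t with
  | var m =>
    intro k u; simp only [lift]
    split_ifs <;> (try simp only [lift, subst]) <;> (try split_ifs) <;>
      first
        | rfl
        | (exfalso; omega)
        | (congr 1; omega)
  | app a b iha ihb => intro k u; simp [lift, subst, iha, ihb]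
  | abs a ih => intro k u; simp [lift, subst, ih]

lemma lift_subst_high (t : Lam) : ∀ k n (u : Lam), n ≤ k →
    lift (subst t n u) k = subst (lift t (k + 1)) n (lift u k) := by
  induction t with
  | var m =>
    intro k n u h; simp only [subst, lift]
    split_ifs <;> (try simp only [lift, subst]) <;> (try split_ifs) <;>
      first
        | rfl
        | (exfalso; omega)
        | (congr 1; omega)
  | app a b iha ihb => intro k n u h; simp [lift, subst, iha _ _ _ h, ihb _ _ _ h]
  | abs a ih =>
    intro k n u h
    simp only [lift, subst]
    rw [ih (k+1) (n+1) (lift u 0) (by omega), lift_lift u 0 k (by omega)]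

lemma subst_subst (t : Lam) : ∀ i k (v w : Lam), i ≤ k →
    (t.subst i v).subst k w
      = (t.subst (k + 1) (lift w i)).subst i (v.subst k w) := by
  induction t with
  | var m =>
    intro i k v w h
    simp only [subst]
    split_ifs <;> (try simp only [lift, subst]) <;> (try split_ifs) <;>
      first
        | rfl
        | (exfalso; omega)
        | (congr 1; omega)
        | (exact (subst_lift w i _).symm)
  | app a b iha ihb => intro i k v w h; simp [subst, iha _ _ _ _ h, ihb _ _ _ _ h]
  | abs a ih =>
    intro i k v w h
    simp only [subst]
    rw [ih (i+1) (k+1) (lift v 0) (lift w 0) (by omega),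
      lift_lift w 0 i (by omega), lift_subst_low v 0 k w (by omega)]

lemma lift_beta {a a' : Lam} (h : Beta a a') : ∀ k, Beta (lift a k) (lift a' k) := by
  induction h with
  | beta t s =>
    intro k
    have := Beta.beta (lift t (k+1)) (lift s k)
    rwa [← lift_subst_high t k 0 s (by omega)] at this
  | appL t _ ih => intro k; exact Beta.appL _ (ih k)
  | appR s _ ih => intro k; exact Beta.appR _ (ih k)
  | abs _ ih => intro k; exact Beta.abs (ih (k+1))

lemma subst_beta_left {a a' : Lam} (h : Beta a a') :
    ∀ k (w : Lam), Beta (a.subst k w) (a'.subst k w) := by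
  induction h with
  | beta t s =>
    intro k w
    have := Beta.beta (t.subst (k+1) (lift w 0)) (s.subst k w)
    rwa [← subst_subst t 0 k s w (by omega)] at this
  | appL t _ ih => intro k w; exact Beta.appL _ (ih k w)
  | appR s _ ih => intro k w; exact Beta.appR _ (ih k w)
  | abs _ ih => intro k w; exact Beta.abs (ih (k+1) (lift w 0))

lemma betas_abs {a a' : Lam} (h : Betas a a') : Betas (abs a) (abs a') :=
  Relation.ReflTransGen.lift abs (fun _ _ => Beta.abs) _ _ h

lemma betas_app {a a' b b' : Lam} (ha : Betas a a') (hb : Betas b b') :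
    Betas (app a b) (app a' b') :=
  Relation.ReflTransGen.trans
    (Relation.ReflTransGen.lift (fun x => app x b) (fun _ _ => Beta.appL b) _ _ ha)
    (Relation.ReflTransGen.lift (fun y => app a' y) (fun _ _ => Beta.appR a') _ _ hb)

lemma subst_betas_left {a a' : Lam} (h : Betas a a') (k : Nat) (w : Lam) :
    Betas (a.subst k w) (a'.subst k w) :=
  Relation.ReflTransGen.lift (fun x : Lam => x.subst k w)
    (fun _ _ hb => subst_beta_left hb k w) _ _ h

lemma subst_betas_right (a : Lam) : ∀ k {w w' : Lam}, Betas w w' →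
    Betas (a.subst k w) (a.subst k w') := by
  induction a with
  | var m =>
    intro k w w' h
    simp only [subst]
    split_ifs <;> first | exact Relation.ReflTransGen.refl | exact h
  | app a b iha ihb =>
    intro k w w' h
    exact betas_app (iha k h) (ihb k h)
  | abs a ih =>
    intro k w w' h
    exact betas_abs (ih (k+1)
      (Relation.ReflTransGen.lift (fun x => lift x 0) (fun _ _ hb => lift_beta hb 0) _ _ h))

lemma subst_betas {a a' w w' : Lam} (ha : Betas a a') (hw : Betas w w') (k : Nat) :
    Betas (a.subst k w) (a'.subst k w') :=
  Relation.ReflTransGen.trans (subst_betas_left ha k w) (subst_betas_right a' k hw)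

lemma app_betas_appBeta (a b : Lam) : Betas (app a b) (appBeta a b) := by
  cases a with
  | var i => exact Relation.ReflTransGen.refl
  | app s t => exact Relation.ReflTransGen.refl
  | abs u => exact Relation.ReflTransGen.single (Beta.beta u b)

lemma betas_abs_inv {u c : Lam} (h : Betas (abs u) c) :
    ∃ u', c = abs u' ∧ Betas u u' := by
  induction h with
  | refl => exact ⟨u, rfl, Relation.ReflTransGen.refl⟩
  | tail _ hbc ih =>
    obtain ⟨u', rfl, hu⟩ := ih
    cases hbc with
    | abs h' => exact ⟨_, rfl, hu.tail h'⟩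

lemma appBeta_betas {a a' b b' : Lam} (ha : Betas a a') (hb : Betas b b') :
    Betas (appBeta a b) (appBeta a' b') := by
  cases a with
  | abs u =>
    obtain ⟨u', rfl, hu⟩ := betas_abs_inv ha
    exact subst_betas hu hb 0
  | var i =>
    exact Relation.ReflTransGen.trans (betas_app ha hb) (app_betas_appBeta a' b')
  | app s t =>
    exact Relation.ReflTransGen.trans (betas_app ha hb) (app_betas_appBeta a' b')

lemma subst_appBeta (a b : Lam) (k : Nat) (w : Lam) :
    Betas ((appBeta a b).subst k w) (appBeta (a.subst k w) (b.subst k w)) := by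
  cases a with
  | abs u =>
    simp only [appBeta, subst]
    rw [subst_subst u 0 k b w (by omega)]
  | var i =>
    exact app_betas_appBeta _ _
  | app s t =>
    exact app_betas_appBeta _ _

lemma lift_appBeta (a b : Lam) (k : Nat) :
    lift (appBeta a b) k = appBeta (lift a k) (lift b k) := by
  cases a with
  | abs u =>
    simp only [appBeta, lift]
    exact lift_subst_high u k 0 b (by omega)
  | var i => simp only [appBeta, lift]; split_ifs <;> rfl
  | app s t => rfl

lemma dev_lift (t : Lam) : ∀ k, dev (lift t k) = lift (dev t) k := by
  induction t with
  | var i => intro k; simp only [lift, dev]; split_ifs <;> rfl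
  | app a b iha ihb => intro k; simp [dev, lift, iha, ihb, lift_appBeta]
  | abs a ih => intro k; simp [dev, lift, ih]

end Lam

theorem rhs_dev (t s : Lam) (x : Nat) :
    Lam.Betas ((Lam.dev t).subst x (Lam.dev s)) (Lam.dev (t.subst x s)) := by
  induction t generalizing s x with
  | var i =>
    simp only [Lam.dev, Lam.subst]
    split_ifs <;> exact Relation.ReflTransGen.refl
  | app a b iha ihb =>
    simp only [Lam.dev, Lam.subst]
    exact Relation.ReflTransGen.trans
      (Lam.subst_appBeta (Lam.dev a) (Lam.dev b) x (Lam.dev s))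
      (Lam.appBeta_betas (iha s x) (ihb s x))
  | abs a ih =>
    simp only [Lam.dev, Lam.subst]
    rw [← Lam.dev_lift s 0]
    exact Lam.betas_abs (ih (Lam.lift s 0) (x + 1))
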